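/- Let T ≥ 1 be a real number and Δ ∈ (0,1]. Let X₁, …, X_n and Y₁, …, Y_m be random variables taking values in [0,1], all n + m of them mutually independent, such that each X_ℓ has mean μ and each Y_ℓ has mean μ*, where μ* − μ ≥ Δ. If n ≥ 4·log(T)/Δ² and m ≥ 4·log(T)/Δ², then P( (1/n)·Σ_{ℓ=1}^{n} X_ℓ ≥ (1/m)·Σ_{ℓ=1}^{m} Y_ℓ ) ≤ 2/T². -/

import Mathlib

open MeasureTheory ProbabilityTheory

section Helpers

lemma hoeffding_calc (p : ℝ) (hp0 : 0 ≤ p) (hp1 : p ≤ 1) (t : ℝ) :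
    1 - p + p * Real.exp t ≤ Real.exp (p * t + t ^ 2 / 8) := by
  set F : ℝ → ℝ := fun s => 1 - p + p * Real.exp s with hFdef
  have hFpos : ∀ s, 0 < F s := by
    intro s
    have h1 := Real.exp_pos s
    rcases lt_or_ge p 1 with h | h
    · have : 0 ≤ p * Real.exp s := by positivity
      simp only [hFdef]; nlinarith
    · have hp : p = 1 := le_antisymm hp1 h
      simp only [hFdef, hp]; nlinarith
  have hFd : ∀ s, HasDerivAt F (p * Real.exp s) s := by
    intro s
    have := ((Real.hasDerivAt_exp s).const_mul p).const_add (1 - p)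
    simpa [hFdef] using this
  set g : ℝ → ℝ := fun s => p * s + s ^ 2 / 8 - Real.log (F s) with hgdef
  set g' : ℝ → ℝ := fun s => p + s / 4 - p * Real.exp s / F s with hg'def
  have hgd : ∀ s, HasDerivAt g (g' s) s := by
    intro s
    have hlog : HasDerivAt (fun s => Real.log (F s)) (p * Real.exp s / F s) s :=
      (hFd s).log (hFpos s).ne'
    have h1 : HasDerivAt (fun s : ℝ => p * s + s ^ 2 / 8)
        (p + s / 4) s := by
      have hpow : HasDerivAt (fun s : ℝ => s ^ 2 / 8) (2 * s ^ 1 / 8) s :=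
        (hasDerivAt_pow 2 s).div_const 8
      have hlin : HasDerivAt (fun s : ℝ => p * s) (p * 1) s :=
        (hasDerivAt_id s).const_mul p
      have := hlin.add hpow
      exact this.congr_deriv (by ring)
    exact h1.sub hlog
  have hg'd : ∀ s, HasDerivAt g'
      (1/4 - (p * Real.exp s * F s - p * Real.exp s * (p * Real.exp s)) / (F s) ^ 2) s := by
    intro s
    have hdiv : HasDerivAt (fun s => p * Real.exp s / F s)
        ((p * Real.exp s * F s - p * Real.exp s * (p * Real.exp s)) / (F s) ^ 2) s :=
      (((Real.hasDerivAt_exp s).const_mul p).div (hFd s) (hFpos s).ne')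
    have h1 : HasDerivAt (fun s : ℝ => p + s / 4) (1/4) s := by
      simpa using ((hasDerivAt_id s).div_const 4).const_add p
    exact h1.sub hdiv
  have hderiv_nonneg : ∀ s, 0 ≤ 1/4 - (p * Real.exp s * F s
      - p * Real.exp s * (p * Real.exp s)) / (F s) ^ 2 := by
    intro s
    set q : ℝ := p * Real.exp s / F s with hq
    have hF := hFpos s
    have hnum : 0 ≤ p * Real.exp s := by positivity
    have hle : p * Real.exp s ≤ F s := by
      simp only [hFdef]; nlinarith [Real.exp_pos s]
    have hq0 : 0 ≤ q := by positivity
    have hq1 : q ≤ 1 := by rw [hq]; exact (div_le_one hF).mpr hle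
    have heq : (p * Real.exp s * F s - p * Real.exp s * (p * Real.exp s)) / (F s) ^ 2
        = q - q ^ 2 := by
      rw [hq]; field_simp
    rw [heq]
    nlinarith [sq_nonneg (q - 1/2)]
  have hg'mono : Monotone g' :=
    monotone_of_deriv_nonneg (fun s => (hg'd s).differentiableAt)
      (fun s => by rw [(hg'd s).deriv]; exact hderiv_nonneg s)
  have hg'0 : g' 0 = 0 := by
    simp only [hg'def, hFdef]
    norm_num [Real.exp_zero]
  have hg0 : g 0 = 0 := by
    simp only [hgdef, hFdef]
    norm_num [Real.exp_zero]
  have hgc : ∀ s ∈ (Set.univ : Set ℝ), ContinuousAt g s :=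
    fun s _ => (hgd s).continuousAt
  have hgnonneg : 0 ≤ g t := by
    rcases le_total 0 t with ht | ht
    · have hmono : MonotoneOn g (Set.Ici 0) := by
        apply monotoneOn_of_deriv_nonneg (convex_Ici 0)
          (Continuous.continuousOn (by
            exact continuous_iff_continuousAt.mpr fun s => (hgd s).continuousAt))
          (fun s hs => (hgd s).differentiableAt.differentiableWithinAt)
        intro s hs
        rw [(hgd s).deriv]
        have : (0:ℝ) ≤ s := le_of_lt (by simpa using hs)
        calc (0:ℝ) = g' 0 := hg'0.symm
          _ ≤ g' s := hg'mono this
      have := hmono (Set.self_mem_Ici) (Set.mem_Ici.mpr ht) ht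
      linarith [hg0 ▸ this]
    · have hanti : AntitoneOn g (Set.Iic 0) := by
        apply antitoneOn_of_deriv_nonpos (convex_Iic 0)
          (Continuous.continuousOn (by
            exact continuous_iff_continuousAt.mpr fun s => (hgd s).continuousAt))
          (fun s hs => (hgd s).differentiableAt.differentiableWithinAt)
        intro s hs
        rw [(hgd s).deriv]
        have : s ≤ (0:ℝ) := le_of_lt (by simpa using hs)
        calc g' s ≤ g' 0 := hg'mono this
          _ = 0 := hg'0
      have := hanti (Set.mem_Iic.mpr ht) Set.self_mem_Iic ht
      linarith [hg0 ▸ this]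
  have : Real.log (F t) ≤ p * t + t ^ 2 / 8 := by
    simp only [hgdef] at hgnonneg; linarith
  have := (Real.log_le_iff_le_exp (hFpos t)).mp this
  simpa [hFdef] using this

variable {Ω : Type*} [MeasurableSpace Ω] {P : Measure Ω} [IsProbabilityMeasure P]

lemma integrable_of_Icc {X : Ω → ℝ} (hm : Measurable X)
    (hr : ∀ᵐ ω ∂P, X ω ∈ Set.Icc (0:ℝ) 1) : Integrable X P := by
  refine Integrable.mono' (integrable_const 1) hm.aestronglyMeasurable ?_
  filter_upwards [hr] with ω h
  rw [Real.norm_eq_abs, abs_of_nonneg h.1]; exact h.2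

lemma integrable_exp_of_Icc {X : Ω → ℝ} (hm : Measurable X)
    (hr : ∀ᵐ ω ∂P, X ω ∈ Set.Icc (0:ℝ) 1) (t : ℝ) :
    Integrable (fun ω => Real.exp (t * X ω)) P := by
  refine Integrable.mono' (integrable_const (Real.exp |t|))
    ((hm.const_mul t).exp).aestronglyMeasurable ?_
  filter_upwards [hr] with ω h
  rw [Real.norm_eq_abs, abs_of_nonneg (Real.exp_pos _).le, Real.exp_le_exp]
  calc t * X ω ≤ |t * X ω| := le_abs_self _
    _ = |t| * |X ω| := abs_mul t _
    _ ≤ |t| * 1 := by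
        refine mul_le_mul_of_nonneg_left ?_ (abs_nonneg t)
        rw [abs_of_nonneg h.1]; exact h.2
    _ = |t| := mul_one _

lemma mgf_le_of_Icc {X : Ω → ℝ} (hm : Measurable X)
    (hr : ∀ᵐ ω ∂P, X ω ∈ Set.Icc (0:ℝ) 1) {μ : ℝ} (hmean : ∫ ω, X ω ∂P = μ) (t : ℝ) :
    mgf X P t ≤ Real.exp (t * μ + t ^ 2 / 8) := by
  have hint : Integrable X P := integrable_of_Icc hm hr
  have hμ0 : 0 ≤ μ := by
    rw [← hmean]
    exact integral_nonneg_of_ae (by filter_upwards [hr] with ω h using h.1)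
  have hμ1 : μ ≤ 1 := by
    rw [← hmean]
    calc ∫ ω, X ω ∂P ≤ ∫ _, (1:ℝ) ∂P :=
          integral_mono_ae hint (integrable_const 1) (by filter_upwards [hr] with ω h using h.2)
      _ = 1 := by simp
  have hbound : ∀ᵐ ω ∂P, Real.exp (t * X ω) ≤ 1 - X ω + X ω * Real.exp t := by
    filter_upwards [hr] with ω h
    have := convexOn_exp.2 (Set.mem_univ (0:ℝ)) (Set.mem_univ t)
      (by linarith [h.2] : (0:ℝ) ≤ 1 - X ω) h.1 (by ring)
    simp only [smul_eq_mul, mul_zero, Real.exp_zero, mul_one] at this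
    calc Real.exp (t * X ω) = Real.exp ((1 - X ω) * 0 + X ω * t) := by ring_nf
      _ ≤ (1 - X ω) * 1 + X ω * Real.exp t := by
          simpa [smul_eq_mul] using this
      _ = 1 - X ω + X ω * Real.exp t := by ring
  calc mgf X P t = ∫ ω, Real.exp (t * X ω) ∂P := rfl
    _ ≤ ∫ ω, (1 - X ω + X ω * Real.exp t) ∂P := by
        refine integral_mono_ae (integrable_exp_of_Icc hm hr t) ?_ hbound
        exact ((integrable_const 1).sub hint).add (hint.mul_const _)
    _ = 1 - μ + μ * Real.exp t := by
        have h1 : Integrable (fun ω => 1 - X ω) P := by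
          exact (integrable_const 1).sub hint
        have h2 : ∫ ω, (1 - X ω) ∂P = 1 - μ := by
          rw [integral_sub (integrable_const 1) hint, hmean]; simp
        rw [integral_add h1 (hint.mul_const _), h2, integral_mul_const, hmean]
    _ ≤ Real.exp (μ * t + t ^ 2 / 8) := hoeffding_calc μ hμ0 hμ1 t
    _ = Real.exp (t * μ + t ^ 2 / 8) := by rw [mul_comm]

lemma chernoff_upper_Icc {κ : Type*} {f : κ → Ω → ℝ} (hmeas : ∀ i, Measurable (f i))
    (hindep : iIndepFun f P)
    (s : Finset κ) {μs : ℝ} (hr : ∀ i ∈ s, ∀ᵐ ω ∂P, f i ω ∈ Set.Icc (0:ℝ) 1)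
    (hmean : ∀ i ∈ s, ∫ ω, f i ω ∂P = μs)
    (t ε : ℝ) (ht : 0 ≤ t) :
    (P {ω | ε ≤ ∑ i ∈ s, f i ω}).toReal
      ≤ Real.exp (-t * ε + s.card * (t * μs + t ^ 2 / 8)) := by
  have hint : ∀ i ∈ s, Integrable (fun ω => Real.exp (t * f i ω)) P :=
    fun i hi => integrable_exp_of_Icc (hmeas i) (hr i hi) t
  have hset : {ω | ε ≤ ∑ i ∈ s, f i ω} = {ω | ε ≤ (∑ i ∈ s, f i) ω} := by
    ext ω; simp [Finset.sum_apply]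
  rw [hset]
  calc (P {ω | ε ≤ (∑ i ∈ s, f i) ω}).toReal
      ≤ Real.exp (-t * ε) * mgf (∑ i ∈ s, f i) P t :=
        measure_ge_le_exp_mul_mgf ε ht (hindep.integrable_exp_mul_sum hmeas hint)
    _ ≤ Real.exp (-t * ε) * Real.exp (s.card * (t * μs + t ^ 2 / 8)) := by
        refine mul_le_mul_of_nonneg_left ?_ (Real.exp_pos _).le
        rw [hindep.mgf_sum hmeas s]
        calc ∏ i ∈ s, mgf (f i) P t
            ≤ ∏ i ∈ s, Real.exp (t * μs + t ^ 2 / 8) :=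
              Finset.prod_le_prod (fun i _ => mgf_nonneg)
                (fun i hi => mgf_le_of_Icc (hmeas i) (hr i hi) (hmean i hi) t)
          _ = Real.exp (s.card * (t * μs + t ^ 2 / 8)) := by
              rw [Finset.prod_const, ← Real.exp_nat_mul]
    _ = Real.exp (-t * ε + s.card * (t * μs + t ^ 2 / 8)) := (Real.exp_add _ _).symm

lemma chernoff_lower_Icc {κ : Type*} {f : κ → Ω → ℝ} (hmeas : ∀ i, Measurable (f i))
    (hindep : iIndepFun f P)
    (s : Finset κ) {μs : ℝ} (hr : ∀ i ∈ s, ∀ᵐ ω ∂P, f i ω ∈ Set.Icc (0:ℝ) 1)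
    (hmean : ∀ i ∈ s, ∫ ω, f i ω ∂P = μs)
    (t ε : ℝ) (ht : t ≤ 0) :
    (P {ω | ∑ i ∈ s, f i ω ≤ ε}).toReal
      ≤ Real.exp (-t * ε + s.card * (t * μs + t ^ 2 / 8)) := by
  have hint : ∀ i ∈ s, Integrable (fun ω => Real.exp (t * f i ω)) P :=
    fun i hi => integrable_exp_of_Icc (hmeas i) (hr i hi) t
  have hset : {ω | ∑ i ∈ s, f i ω ≤ ε} = {ω | (∑ i ∈ s, f i) ω ≤ ε} := by
    ext ω; simp [Finset.sum_apply]
  rw [hset]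
  calc (P {ω | (∑ i ∈ s, f i) ω ≤ ε}).toReal
      ≤ Real.exp (-t * ε) * mgf (∑ i ∈ s, f i) P t :=
        measure_le_le_exp_mul_mgf ε ht (hindep.integrable_exp_mul_sum hmeas hint)
    _ ≤ Real.exp (-t * ε) * Real.exp (s.card * (t * μs + t ^ 2 / 8)) := by
        refine mul_le_mul_of_nonneg_left ?_ (Real.exp_pos _).le
        rw [hindep.mgf_sum hmeas s]
        calc ∏ i ∈ s, mgf (f i) P t
            ≤ ∏ i ∈ s, Real.exp (t * μs + t ^ 2 / 8) :=
              Finset.prod_le_prod (fun i _ => mgf_nonneg)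
                (fun i hi => mgf_le_of_Icc (hmeas i) (hr i hi) (hmean i hi) t)
          _ = Real.exp (s.card * (t * μs + t ^ 2 / 8)) := by
              rw [Finset.prod_const, ← Real.exp_nat_mul]
    _ = Real.exp (-t * ε + s.card * (t * μs + t ^ 2 / 8)) := (Real.exp_add _ _).symm

end Helpers

/-- Probabilistic core of the skipping-mechanism lemma: if `X₁, …, X_n` have mean `μ`,
`Y₁, …, Y_m` have mean `μ*` with `μ* − μ ≥ Δ`, all `n + m` variables are `[0,1]`-valued and
mutually independent, and `n, m ≥ 4·log(T)/Δ²`, then the probability that the empirical mean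
of the `X`'s is at least that of the `Y`'s is at most `2/T²`. -/
theorem skipping_mechanism_error_bound
    {Ω : Type*} [MeasurableSpace Ω] (P : Measure Ω) [IsProbabilityMeasure P]
    (T : ℝ) (hT : 1 ≤ T) (Δ : ℝ) (hΔ : Δ ∈ Set.Ioc (0 : ℝ) 1)
    (n m : ℕ) (μ μstar : ℝ)
    (X : Fin n → Ω → ℝ) (Y : Fin m → Ω → ℝ)
    (hmeasX : ∀ i, Measurable (X i)) (hmeasY : ∀ j, Measurable (Y j))
    (hrangeX : ∀ i, ∀ᵐ ω ∂P, X i ω ∈ Set.Icc (0 : ℝ) 1)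
    (hrangeY : ∀ j, ∀ᵐ ω ∂P, Y j ω ∈ Set.Icc (0 : ℝ) 1)
    (hmeanX : ∀ i, ∫ ω, X i ω ∂P = μ)
    (hmeanY : ∀ j, ∫ ω, Y j ω ∂P = μstar)
    (hgap : Δ ≤ μstar - μ)
    (hindep : iIndepFun (Sum.elim X Y) P)
    (hn : 4 * Real.log T / Δ ^ 2 ≤ (n : ℝ))
    (hm : 4 * Real.log T / Δ ^ 2 ≤ (m : ℝ)) :
    P {ω | (1 / (m : ℝ)) * ∑ j, Y j ω ≤ (1 / (n : ℝ)) * ∑ i, X i ω}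
      ≤ ENNReal.ofReal (2 / T ^ 2) := by
  obtain ⟨hΔ0, hΔ1⟩ := hΔ
  rcases eq_or_lt_of_le hT with hT1 | hT1
  · -- T = 1 : bound is 2, trivial
    calc P _ ≤ 1 := prob_le_one
      _ ≤ ENNReal.ofReal (2 / T ^ 2) := by
          rw [← hT1]; norm_num
  have hT0 : (0:ℝ) < T := by linarith
  have hlogT : 0 < Real.log T := Real.log_pos hT1
  have hn0 : (0:ℝ) < (n:ℝ) := lt_of_lt_of_le (by positivity) hn
  have hm0 : (0:ℝ) < (m:ℝ) := lt_of_lt_of_le (by positivity) hm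
  have hmeas : ∀ i : Fin n ⊕ Fin m, Measurable (Sum.elim X Y i) := by
    rintro (i | j)
    exacts [hmeasX i, hmeasY j]
  set sX : Finset (Fin n ⊕ Fin m) :=
    Finset.univ.map ⟨Sum.inl, Sum.inl_injective⟩ with hsXdef
  set sY : Finset (Fin n ⊕ Fin m) :=
    Finset.univ.map ⟨Sum.inr, Sum.inr_injective⟩ with hsYdef
  have hsumX : ∀ ω, ∑ k ∈ sX, Sum.elim X Y k ω = ∑ i, X i ω := by
    intro ω; rw [hsXdef, Finset.sum_map]; simp
  have hsumY : ∀ ω, ∑ k ∈ sY, Sum.elim X Y k ω = ∑ j, Y j ω := by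
    intro ω; rw [hsYdef, Finset.sum_map]; simp
  have hcardX : sX.card = n := by simp [hsXdef]
  have hcardY : sY.card = m := by simp [hsYdef]
  have hrX : ∀ k ∈ sX, ∀ᵐ ω ∂P, Sum.elim X Y k ω ∈ Set.Icc (0:ℝ) 1 := by
    intro k hk
    rw [hsXdef, Finset.mem_map] at hk
    obtain ⟨i, -, rfl⟩ := hk
    simpa using hrangeX i
  have hrY : ∀ k ∈ sY, ∀ᵐ ω ∂P, Sum.elim X Y k ω ∈ Set.Icc (0:ℝ) 1 := by
    intro k hk
    rw [hsYdef, Finset.mem_map] at hk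
    obtain ⟨j, -, rfl⟩ := hk
    simpa using hrangeY j
  have hmX : ∀ k ∈ sX, ∫ ω, Sum.elim X Y k ω ∂P = μ := by
    intro k hk
    rw [hsXdef, Finset.mem_map] at hk
    obtain ⟨i, -, rfl⟩ := hk
    simpa using hmeanX i
  have hmY : ∀ k ∈ sY, ∫ ω, Sum.elim X Y k ω ∂P = μstar := by
    intro k hk
    rw [hsYdef, Finset.mem_map] at hk
    obtain ⟨j, -, rfl⟩ := hk
    simpa using hmeanY j
  set B : Set Ω := {ω | (n:ℝ) * (μ + Δ/2) ≤ ∑ k ∈ sX, Sum.elim X Y k ω} with hBdef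
  set C : Set Ω := {ω | ∑ k ∈ sY, Sum.elim X Y k ω ≤ (m:ℝ) * (μstar - Δ/2)} with hCdef
  -- event inclusion
  have hsub : {ω | (1 / (m : ℝ)) * ∑ j, Y j ω ≤ (1 / (n : ℝ)) * ∑ i, X i ω} ⊆ B ∪ C := by
    intro ω hω
    simp only [Set.mem_setOf_eq] at hω
    by_contra hnot
    simp only [Set.mem_union, hBdef, hCdef, Set.mem_setOf_eq, not_or, not_le] at hnot
    obtain ⟨h1, h2⟩ := hnot
    rw [hsumX ω] at h1
    rw [hsumY ω] at h2
    have e1 : (1 / (n:ℝ)) * ∑ i, X i ω < μ + Δ/2 := by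
      have := mul_lt_mul_of_pos_left h1 (one_div_pos.mpr hn0)
      rwa [show (1/(n:ℝ)) * ((n:ℝ) * (μ + Δ/2)) = μ + Δ/2 by field_simp] at this
    have e2 : μstar - Δ/2 < (1 / (m:ℝ)) * ∑ j, Y j ω := by
      have := mul_lt_mul_of_pos_left h2 (one_div_pos.mpr hm0)
      rwa [show (1/(m:ℝ)) * ((m:ℝ) * (μstar - Δ/2)) = μstar - Δ/2 by field_simp] at this
    linarith
  -- tail bounds
  have hT2 : 4 * Real.log T ≤ (n:ℝ) * Δ ^ 2 := by
    rw [div_le_iff₀ (by positivity)] at hn; linarith [hn]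
  have hT2' : 4 * Real.log T ≤ (m:ℝ) * Δ ^ 2 := by
    rw [div_le_iff₀ (by positivity)] at hm; linarith [hm]
  have hexp : Real.exp (-(2 * Real.log T)) = 1 / T ^ 2 := by
    rw [Real.exp_neg, show (2:ℝ) * Real.log T = Real.log (T ^ 2) by
      rw [Real.log_pow]; norm_num, Real.exp_log (by positivity), one_div]
  have hBbound : (P B).toReal ≤ 1 / T ^ 2 := by
    have := chernoff_upper_Icc hmeas hindep sX hrX hmX (2*Δ) ((n:ℝ) * (μ + Δ/2))
      (by positivity)
    rw [hcardX] at this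
    refine this.trans ?_
    rw [← hexp]
    apply Real.exp_le_exp.mpr
    have : -(2*Δ) * ((n:ℝ) * (μ + Δ/2)) + (n:ℝ) * ((2*Δ) * μ + (2*Δ)^2/8)
        = -((n:ℝ) * Δ^2 / 2) := by ring
    rw [this]
    linarith
  have hCbound : (P C).toReal ≤ 1 / T ^ 2 := by
    have := chernoff_lower_Icc hmeas hindep sY hrY hmY (-(2*Δ)) ((m:ℝ) * (μstar - Δ/2))
      (by linarith)
    rw [hcardY] at this
    refine this.trans ?_
    rw [← hexp]
    apply Real.exp_le_exp.mpr
    have : -(-(2*Δ)) * ((m:ℝ) * (μstar - Δ/2)) + (m:ℝ) * ((-(2*Δ)) * μstar + (-(2*Δ))^2/8)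
        = -((m:ℝ) * Δ^2 / 2) := by ring
    rw [this]
    linarith
  have hBle : P B ≤ ENNReal.ofReal (1 / T ^ 2) :=
    (ENNReal.le_ofReal_iff_toReal_le (measure_ne_top P B) (by positivity)).mpr hBbound
  have hCle : P C ≤ ENNReal.ofReal (1 / T ^ 2) :=
    (ENNReal.le_ofReal_iff_toReal_le (measure_ne_top P C) (by positivity)).mpr hCbound
  calc P {ω | (1 / (m : ℝ)) * ∑ j, Y j ω ≤ (1 / (n : ℝ)) * ∑ i, X i ω}
      ≤ P (B ∪ C) := measure_mono hsub
    _ ≤ P B + P C := measure_union_le B C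
    _ ≤ ENNReal.ofReal (1 / T ^ 2) + ENNReal.ofReal (1 / T ^ 2) := add_le_add hBle hCle
    _ = ENNReal.ofReal (2 / T ^ 2) := by
        rw [← ENNReal.ofReal_add (by positivity) (by positivity)]
        congr 1; ring
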